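/- Let F be a field of characteristic 0 containing a primitive n-th root of unity for every n ≥ 1, let F̄ be an algebraic closure of F, and let k be any field. Let χ : F̄ˣ → kˣ be a group homomorphism whose restriction to the group μ∞ of all roots of unity in F̄ˣ is injective. If σ ∈ Gal(F̄/F) satisfies χ ∘ σ = χ, then σ is the identity. Equivalently, Gal(F̄/F) acts freely (via σ · χ = χ ∘ σ⁻¹) on the set of group homomorphisms F̄ˣ → kˣ that are injective on μ∞. -/

import Mathlib

open scoped IntermediateField

lemma lagrange_resolvent {F E : Type*} [Field F] [Field E] [Algebra F E]
    (τ : E ≃ₐ[F] E) (m : ℕ) (hm : 0 < m) (hord : orderOf τ = m)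
    (ζ : F) (hζ : ζ ^ m = 1) :
    ∃ x : E, x ≠ 0 ∧ τ x = algebraMap F E ζ * x := by
  set ζE : E := algebraMap F E ζ with hζE
  have hζEm : ζE ^ m = 1 := by rw [hζE, ← map_pow, hζ, map_one]
  have hζIm : (ζE⁻¹) ^ m = 1 := by rw [inv_pow, hζEm, inv_one]
  -- linear independence of the monoid homs τ^i
  have hfam : LinearIndependent E (fun i : Fin m => (((τ ^ (i : ℕ) : E ≃ₐ[F] E) : E →+* E).toMonoidHom : E → E)) := by
    apply (linearIndependent_monoidHom E E).comp
    intro i j hij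
    have : (τ ^ (i : ℕ) : E ≃ₐ[F] E) = τ ^ (j : ℕ) := by
      ext z
      exact congrFun (congrArg (fun (f : E →* E) => (f : E → E)) hij) z
    have := pow_eq_pow_iff_modEq.mp this
    rw [hord] at this
    exact Fin.ext ((Nat.mod_eq_of_lt i.isLt) ▸ (Nat.mod_eq_of_lt j.isLt) ▸ this)
  -- find z with the resolvent nonzero
  have : ¬ ∀ z : E, ∑ i : Fin m, (ζE⁻¹) ^ (i : ℕ) * (τ ^ (i : ℕ)) z = 0 := by
    intro H
    have h0 := Fintype.linearIndependent_iff.mp hfam (fun i => (ζE⁻¹) ^ (i : ℕ)) ?_ ⟨0, hm⟩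
    · simp at h0
    · funext z
      simpa using H z
  push_neg at this
  obtain ⟨z, hz⟩ := this
  set g : ℕ → E := fun j => (ζE⁻¹) ^ j * (τ ^ j) z with hg
  have hsum : ∑ i : Fin m, (ζE⁻¹) ^ (i : ℕ) * (τ ^ (i : ℕ)) z = ∑ i ∈ Finset.range m, g i := by
    rw [Finset.sum_range fun i => g i]
  refine ⟨∑ i ∈ Finset.range m, g i, by rwa [← hsum], ?_⟩
  have hζE0 : ζE ≠ 0 := by
    intro h
    rw [h, zero_pow hm.ne'] at hζEm
    exact zero_ne_one hζEm
  have hgm : g m = g 0 := by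
    simp only [hg, (hord ▸ pow_orderOf_eq_one τ : τ ^ m = 1)]
    simp [hζEm]
  have key : ∀ i, τ (g i) = ζE * g (i + 1) := by
    intro i
    have hτζ : τ ζE⁻¹ = ζE⁻¹ := by
      rw [map_inv₀, hζE, AlgEquiv.commutes]
    calc τ (g i) = (ζE⁻¹) ^ i * τ ((τ ^ i) z) := by
          rw [hg]; rw [map_mul, map_pow, hτζ]
      _ = (ζE⁻¹) ^ i * (τ ^ (i + 1)) z := by
          rw [pow_succ', AlgEquiv.mul_apply]
      _ = ζE * g (i + 1) := by
          rw [hg]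
          field_simp
          ring_nf
          rw [mul_inv_cancel₀ hζE0, one_mul]
  rw [map_sum]
  simp_rw [key]
  rw [← Finset.mul_sum]
  congr 1
  have h1 : ∑ i ∈ Finset.range (m + 1), g i = ∑ i ∈ Finset.range m, g (i + 1) + g 0 :=
    Finset.sum_range_succ' g m
  have h2 : ∑ i ∈ Finset.range (m + 1), g i = ∑ i ∈ Finset.range m, g i + g m :=
    Finset.sum_range_succ g m
  have := h1.symm.trans h2
  rw [hgm] at this
  exact add_right_cancel this



/-- Hilbert 90 style freeness: let `F` be a field of characteristic `0` containing a
primitive `n`-th root of unity for every `n ≥ 1`, with algebraic closure `F̄`, and let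
`k` be any field.  If `χ : F̄ˣ → kˣ` is a group homomorphism injective on roots of unity
and `σ ∈ Gal(F̄/F)` satisfies `χ ∘ σ = χ`, then `σ = 1`. -/
theorem galois_acts_freely_on_characters (F Fbar k : Type*) [Field F] [CharZero F]
    [Field Fbar] [Algebra F Fbar] [IsAlgClosure F Fbar] [Field k]
    (hroots : ∀ n : ℕ, 0 < n → ∃ ζ : F, IsPrimitiveRoot ζ n)
    (χ : Fbarˣ →* kˣ)
    (hinj : Set.InjOn χ {x : Fbarˣ | IsOfFinOrder x})
    (σ : Fbar ≃ₐ[F] Fbar)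
    (hχσ : ∀ x : Fbarˣ, χ (Units.map (σ : Fbar →* Fbar) x) = χ x) :
    σ = 1 := by
  by_contra hne
  have hex : ∃ a : Fbar, σ a ≠ a := by
    by_contra h
    push_neg at h
    exact hne (AlgEquiv.ext fun x => (h x).trans (AlgEquiv.one_apply x).symm)
  obtain ⟨a, ha⟩ := hex
  haveI : Algebra.IsAlgebraic F Fbar := IsAlgClosure.isAlgebraic
  have hint : IsIntegral F a := Algebra.IsIntegral.isIntegral a
  haveI : FiniteDimensional F F⟮a⟯ := IntermediateField.adjoin.finiteDimensional hint
  set E : IntermediateField F Fbar := IntermediateField.normalClosure F (F⟮a⟯) Fbar with hE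
  haveI : Normal F E := normalClosure.normal F F⟮a⟯ Fbar
  haveI : FiniteDimensional F E := normalClosure.is_finiteDimensional F F⟮a⟯ Fbar
  have haE : a ∈ E := IntermediateField.le_normalClosure F⟮a⟯
    (IntermediateField.mem_adjoin_simple_self F a)
  set τ : E ≃ₐ[F] E := σ.restrictNormal E with hτdef
  have hcomm : ∀ x : E, (algebraMap E Fbar) (τ x) = σ (algebraMap E Fbar x) :=
    fun x => AlgEquiv.restrictNormal_commutes σ E x
  have hτ1 : τ ≠ 1 := by
    intro h
    apply ha
    have := hcomm ⟨a, haE⟩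
    rw [h] at this
    simpa using this.symm
  set m : ℕ := orderOf τ with hmdef
  have hm : 0 < m := orderOf_pos τ
  have hm1 : m ≠ 1 := fun h => hτ1 (orderOf_eq_one_iff.mp h)
  obtain ⟨ζ, hζ⟩ := hroots m hm
  obtain ⟨x, hx0, hτx⟩ := lagrange_resolvent τ m hm rfl ζ hζ.pow_eq_one
  set y : Fbar := algebraMap E Fbar x with hy
  have hy0 : y ≠ 0 := fun h => hx0 ((map_eq_zero _).mp h)
  set ζF : Fbar := algebraMap F Fbar ζ with hζF
  have hζF0 : ζF ≠ 0 := by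
    simp only [hζF, map_ne_zero]
    exact hζ.ne_zero hm.ne'
  have hσy : σ y = ζF * y := by
    rw [hy, ← hcomm, hτx, map_mul, ← IsScalarTower.algebraMap_apply]
  have hmap : Units.map (σ : Fbar →* Fbar) (Units.mk0 y hy0) = Units.mk0 ζF hζF0 * Units.mk0 y hy0 :=
    Units.ext (by simpa using hσy)
  have hχ1 : χ (Units.mk0 ζF hζF0) = 1 := by
    have := hχσ (Units.mk0 y hy0)
    rw [hmap, map_mul] at this
    exact mul_right_cancel (this.trans (one_mul (χ (Units.mk0 y hy0))).symm)
  have hfin : IsOfFinOrder (Units.mk0 ζF hζF0) := by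
    refine isOfFinOrder_iff_pow_eq_one.mpr ⟨m, hm, Units.ext ?_⟩
    simp [hζF, ← map_pow, hζ.pow_eq_one]
  have hzu1 : Units.mk0 ζF hζF0 = 1 :=
    hinj hfin IsOfFinOrder.one (by rw [hχ1, map_one])
  have hζ1 : ζ = 1 := by
    have : ζF = 1 := by simpa using congrArg Units.val hzu1
    exact (algebraMap F Fbar).injective (by simpa [hζF] using this)
  rw [hζ1] at hζ
  exact hm1 (Nat.dvd_one.mp (hζ.dvd_of_pow_eq_one 1 (one_pow 1)))
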